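/- Suppose the UCB policy is run with a parameter α satisfying ξη(1−η) ≤ α < ξ(1−η) and α > 2. Let A(n) = ⌈(2 β^{1/ξ} / Δ_min)^{1/(1−η)} · n^{α/(ξ(1−η))}⌉. Then for every sub-optimal arm i ≠ i*, every integer n ≥ 1 and every real x ≥ 1, P( T_i(n) ≥ (3 + A(n)) x ) ≤ (2/(α−1)) · ((1 + A(n)) x)^{1−α}. -/

import Mathlib

open MeasureTheory ProbabilityTheory Finset

noncomputable section

/-- Empirical average `X̄_{i,n} = (1/n) ∑_{t=1}^n X_{i,t}` of the first `n` rewards of arm `i`. -/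
def empAvg {Ω : Type*} {K : ℕ} (X : Fin K → ℕ → Ω → ℝ) (i : Fin K) (n : ℕ) (ω : Ω) : ℝ :=
  (∑ t ∈ Finset.Icc 1 n, X i t ω) / n

/-- Bonus term `B_{t,s} = β^{1/ξ} t^{α/ξ} / s^{1-η}`. -/
def bonus (β ξ α η : ℝ) (t s : ℕ) : ℝ :=
  β ^ (1 / ξ) * (t : ℝ) ^ (α / ξ) / (s : ℝ) ^ (1 - η)

/-- Upper confidence index `U_{i,s,t} = X̄_{i,s} + B_{t,s}`. -/
def ucbIdx {Ω : Type*} {K : ℕ} (X : Fin K → ℕ → Ω → ℝ) (β ξ α η : ℝ)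
    (i : Fin K) (s t : ℕ) (ω : Ω) : ℝ :=
  empAvg X i s ω + bonus β ξ α η t s

/-- `T_i(t) = ∑_{l=1}^t 1{I_l = i}`, the number of plays of arm `i` up to (and including)
time `t`. -/
def playCount {Ω : Type*} {K : ℕ} (I : ℕ → Ω → Fin K) (i : Fin K) (t : ℕ) (ω : Ω) : ℕ :=
  ((Finset.Icc 1 t).filter fun l => I l ω = i).card

/-- The `EReal`-valued index `X̄_{i,T_i(t)} + B_{t,T_i(t)}` used by the UCB policy at the end
of time `t`, with the convention that the index is `+∞` when `T_i(t) = 0`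
(i.e. `B_{t,0} = +∞`). -/
def ucbIdxE {Ω : Type*} {K : ℕ} (X : Fin K → ℕ → Ω → ℝ) (β ξ α η : ℝ)
    (I : ℕ → Ω → Fin K) (j : Fin K) (t : ℕ) (ω : Ω) : EReal :=
  if playCount I j t ω = 0 then ⊤
  else ((ucbIdx X β ξ α η j (playCount I j t ω) t ω : ℝ) : EReal)

lemma tail_term {α : ℝ} (hα : 1 < α) {a : ℝ} (ha : 1 ≤ a) :
    (α - 1) * (a + 1) ^ (-α) ≤ a ^ (1 - α) - (a + 1) ^ (1 - α) := by
  have ha0 : (0:ℝ) < a := lt_of_lt_of_le one_pos ha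
  obtain ⟨c, hc, hderiv⟩ := exists_hasDerivAt_eq_slope (fun x : ℝ => x ^ (1 - α))
      (fun x : ℝ => (1 - α) * x ^ (-α)) (by linarith : a < a + 1)
      (by
        apply ContinuousOn.rpow_const continuousOn_id
        intro y hy
        refine Or.inl ?_
        simp only [Set.mem_Icc] at hy
        simp only [id]
        nlinarith [hy.1])
      (by
        intro y hy
        have hy0 : y ≠ 0 := by simp only [Set.mem_Ioo] at hy; nlinarith [hy.1]
        have := Real.hasDerivAt_rpow_const (x := y) (p := 1 - α) (Or.inl hy0)
        convert this using 1
        ring_nf)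
  have hc1 : 0 < c := by have := hc.1; linarith
  have hc2 : c ≤ a + 1 := le_of_lt hc.2
  have hmono : (a + 1) ^ (-α) ≤ c ^ (-α) :=
    Real.rpow_le_rpow_of_nonpos hc1 hc2 (by linarith)
  have heq : (1 - α) * c ^ (-α) = (a + 1) ^ (1 - α) - a ^ (1 - α) := by
    rw [hderiv]; ring_nf
  nlinarith [Real.rpow_nonneg (le_of_lt hc1) (-α)]

lemma tail_sum {α : ℝ} (hα : 1 < α) {m : ℕ} (hm : 1 ≤ m) (N : ℕ) :
    ∑ j ∈ Finset.range N, ((m : ℝ) + 1 + j) ^ (-α) ≤ (m : ℝ) ^ (1 - α) / (α - 1) := by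
  have hα1 : (0:ℝ) < α - 1 := by linarith
  set f : ℕ → ℝ := fun j => ((m:ℝ) + j) ^ (1 - α) with hf
  have key : ∀ j : ℕ, ((m:ℝ) + 1 + j) ^ (-α) ≤ (f j - f (j+1)) / (α - 1) := by
    intro j
    have hmj : (1:ℝ) ≤ (m:ℝ) + j := by
      have h1 : (1:ℝ) ≤ (m:ℝ) := by exact_mod_cast hm
      have h2 : (0:ℝ) ≤ (j:ℝ) := Nat.cast_nonneg j
      linarith
    have h := tail_term hα hmj
    rw [le_div_iff₀ hα1]
    have e1 : (m:ℝ) + 1 + (j:ℝ) = (m:ℝ) + (j:ℝ) + 1 := by ring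
    rw [e1]
    simp only [hf]
    push_cast
    have e2 : (m:ℝ) + ((j:ℝ) + 1) = (m:ℝ) + (j:ℝ) + 1 := by ring
    rw [e2]
    linarith
  calc ∑ j ∈ Finset.range N, ((m : ℝ) + 1 + j) ^ (-α)
      ≤ ∑ j ∈ Finset.range N, (f j - f (j+1)) / (α - 1) :=
        Finset.sum_le_sum fun j _ => key j
    _ = (∑ j ∈ Finset.range N, (f j - f (j+1))) / (α - 1) := by rw [Finset.sum_div]
    _ = (f 0 - f N) / (α - 1) := by rw [Finset.sum_range_sub' f N]
    _ ≤ (m : ℝ) ^ (1 - α) / (α - 1) := by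
        have h0 : f 0 = (m:ℝ) ^ (1 - α) := by simp [hf]
        have hN : 0 ≤ f N := Real.rpow_nonneg (by positivity) _
        rw [h0]
        gcongr
        linarith


set_option maxHeartbeats 1000000 in
/-- Tail bound on the number of plays of a sub-optimal arm:
`P(T_i(n) ≥ (3 + A(n))x) ≤ (2/(α−1)) ((1 + A(n))x)^{1−α}`. -/
theorem ucb_playCount_tail
    {Ω : Type*} [MeasurableSpace Ω] (P : Measure Ω) [IsProbabilityMeasure P]
    (K : ℕ) (hK : 2 ≤ K) (R : ℝ) (hR : 0 < R)
    (X : Fin K → ℕ → Ω → ℝ)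
    (hXmeas : ∀ i t, Measurable (X i t))
    (hXbdd : ∀ i t ω, |X i t ω| ≤ R)
    (μ : Fin K → ℝ)
    (hconv : ∀ i, Filter.Tendsto (fun n => ∫ ω, empAvg X i n ω ∂P)
      Filter.atTop (nhds (μ i)))
    (β ξ η α : ℝ) (hβ : 1 < β) (hξ : 0 < ξ) (hη : 1 / 2 ≤ η) (hη' : η < 1)
    (hα2 : 2 < α) (hαlow : ξ * η * (1 - η) ≤ α) (hαhigh : α < ξ * (1 - η))
    (hconc : ∀ i : Fin K, ∀ n : ℕ, 1 ≤ n → ∀ z : ℝ, 1 ≤ z →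
      P {ω | (n : ℝ) * empAvg X i n ω - n * μ i ≥ (n : ℝ) ^ η * z}
        ≤ ENNReal.ofReal (β / z ^ ξ) ∧
      P {ω | (n : ℝ) * empAvg X i n ω - n * μ i ≤ -((n : ℝ) ^ η * z)}
        ≤ ENNReal.ofReal (β / z ^ ξ))
    (istar : Fin K) (hopt : ∀ j, j ≠ istar → μ j < μ istar)
    (I : ℕ → Ω → Fin K)
    (hImeas : ∀ t, Measurable (I t))
    (hPolicy : ∀ t : ℕ, 1 ≤ t → ∀ ω : Ω, ∀ j : Fin K,
      ucbIdxE X β ξ α η I j (t - 1) ω ≤ ucbIdxE X β ξ α η I (I t ω) (t - 1) ω)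
    (Δmin : ℝ)
    (hΔmin_le : ∀ j, j ≠ istar → Δmin ≤ μ istar - μ j)
    (hΔmin_ex : ∃ j, j ≠ istar ∧ Δmin = μ istar - μ j)
    (hΔβ : 1 < 2 * β ^ (1 / ξ) / Δmin)
    (A : ℕ → ℕ)
    (hA : ∀ n : ℕ,
      A n = ⌈(2 * β ^ (1 / ξ) / Δmin) ^ (1 / (1 - η)) * (n : ℝ) ^ (α / (ξ * (1 - η)))⌉₊)
    (i : Fin K) (hi : i ≠ istar) (n : ℕ) (hn : 1 ≤ n) (x : ℝ) (hx : 1 ≤ x) :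
    P {ω | ((3 + A n : ℕ) : ℝ) * x ≤ (playCount I i n ω : ℝ)}
      ≤ ENNReal.ofReal (2 / (α - 1) * (((1 + A n : ℕ) : ℝ) * x) ^ ((1 : ℝ) - α)) := by
  classical
  -- basic positivity facts
  have hΔ0 : 0 < Δmin := by
    obtain ⟨j, hj, hjeq⟩ := hΔmin_ex
    rw [hjeq]; linarith [hopt j hj]
  have hβ0 : (0:ℝ) < β := by linarith
  have h1η : (0:ℝ) < 1 - η := by linarith
  have hb1 : (1:ℝ) ≤ β ^ (1/ξ) := Real.one_le_rpow hβ.le (by positivity)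
  set b0 : ℝ := 2 * β ^ (1/ξ) / Δmin with hb0
  have hb0pos : 0 < b0 := lt_trans one_pos hΔβ
  have hα1 : (1:ℝ) < α := by linarith
  have hα1' : (0:ℝ) < α - 1 := by linarith
  set u : ℝ := ((1 + A n : ℕ) : ℝ) * x with hu
  set m : ℕ := ⌈u⌉₊ with hm
  have hu1 : (1:ℝ) ≤ u := by
    have h1 : (1:ℝ) ≤ ((1 + A n : ℕ) : ℝ) := by exact_mod_cast Nat.le_add_right 1 (A n)
    calc (1:ℝ) ≤ ((1 + A n : ℕ) : ℝ) := h1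
      _ ≤ u := le_mul_of_one_le_right (by positivity) hx
  have hu0 : (0:ℝ) < u := by linarith
  have hum : u ≤ (m:ℝ) := Nat.le_ceil u
  have hm1 : 1 ≤ m := Nat.ceil_pos.mpr hu0
  have hAu : ((A n : ℕ) : ℝ) ≤ u := by
    have h1 : ((A n : ℕ) : ℝ) ≤ ((1 + A n : ℕ) : ℝ) := Nat.cast_le.mpr (Nat.le_add_left _ _)
    calc ((A n : ℕ) : ℝ) ≤ ((1 + A n : ℕ) : ℝ) := h1
      _ ≤ u := le_mul_of_one_le_right (by positivity) hx
  have hcA : b0 ^ (1/(1-η)) * (n:ℝ) ^ (α/(ξ*(1-η))) ≤ ((A n : ℕ) : ℝ) := by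
    rw [hA n]; exact Nat.le_ceil _
  have hn1 : (1:ℝ) ≤ (n:ℝ) := by exact_mod_cast hn
  have hnpow1 : (1:ℝ) ≤ (n:ℝ) ^ (α/ξ) := Real.one_le_rpow hn1 (by positivity)
  -- threshold: any s ≥ m+1 satisfies s^{1-η} ≥ b0 n^{α/ξ}
  have hslb : ∀ s : ℕ, m + 1 ≤ s → b0 * (n:ℝ) ^ (α/ξ) ≤ (s:ℝ) ^ (1-η) := by
    intro s hs
    have hsu : b0 ^ (1/(1-η)) * (n:ℝ) ^ (α/(ξ*(1-η))) ≤ (s:ℝ) := by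
      have h1 : ((m:ℝ) + 1 ≤ (s:ℝ)) := by exact_mod_cast hs
      linarith [hum, hAu, hcA]
    have hpos : (0:ℝ) ≤ b0 ^ (1/(1-η)) * (n:ℝ) ^ (α/(ξ*(1-η))) := by positivity
    have h2 := Real.rpow_le_rpow hpos hsu h1η.le
    calc b0 * (n:ℝ) ^ (α/ξ)
        = (b0 ^ (1/(1-η)) * (n:ℝ) ^ (α/(ξ*(1-η)))) ^ (1-η) := by
          rw [Real.mul_rpow (by positivity) (by positivity),
            ← Real.rpow_mul hb0pos.le, ← Real.rpow_mul (Nat.cast_nonneg n)]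
          rw [one_div_mul_cancel h1η.ne', Real.rpow_one,
            show α/(ξ*(1-η)) * (1-η) = α/ξ by field_simp]
      _ ≤ (s:ℝ) ^ (1-η) := h2
  have hb0β : b0 * (Δmin/2) = β ^ (1/ξ) := by
    field_simp [hb0]
    rw [hb0, div_mul_cancel₀ _ hΔ0.ne']
  -- z for the Eb events
  set zb : ℕ → ℝ := fun s => (s:ℝ) ^ (1-η) * (Δmin/2) with hzb
  have hzb1 : ∀ s : ℕ, m + 1 ≤ s → 1 ≤ zb s := by
    intro s hs
    have h1 := hslb s hs
    have h2 : b0 ≤ b0 * (n:ℝ) ^ (α/ξ) := le_mul_of_one_le_right hb0pos.le hnpow1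
    have h3 : β ^ (1/ξ) ≤ zb s := by
      rw [← hb0β, hzb]
      exact mul_le_mul_of_nonneg_right (le_trans h2 h1) (by positivity)
    linarith
  -- bonus bound: for s ≥ m+1 and t ≤ n, bonus t s ≤ Δmin/2
  have hB : ∀ s : ℕ, m + 1 ≤ s → ∀ t : ℕ, t ≤ n → bonus β ξ α η t s ≤ Δmin/2 := by
    intro s hs t ht
    have h1 := hslb s hs
    have hspos : (0:ℝ) < (s:ℝ) ^ (1-η) := lt_of_lt_of_le (by positivity) h1
    have htn : (t:ℝ) ^ (α/ξ) ≤ (n:ℝ) ^ (α/ξ) :=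
      Real.rpow_le_rpow (Nat.cast_nonneg t) (by exact_mod_cast ht) (by positivity)
    rw [bonus]
    calc β ^ (1/ξ) * (t:ℝ) ^ (α/ξ) / (s:ℝ) ^ (1-η)
        ≤ β ^ (1/ξ) * (n:ℝ) ^ (α/ξ) / (b0 * (n:ℝ) ^ (α/ξ)) := by
          apply div_le_div₀ (by positivity)
            (mul_le_mul_of_nonneg_left htn (by positivity)) (by positivity) h1
      _ = β ^ (1/ξ) / b0 := by
          have hne : ((n:ℝ) ^ (α/ξ)) ≠ 0 := by positivity
          field_simp
      _ = Δmin/2 := by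
          rw [← hb0β]
          field_simp
  -- bonus monotone in t
  have hBmono : ∀ (s t t' : ℕ), 1 ≤ s → t ≤ t' → bonus β ξ α η t s ≤ bonus β ξ α η t' s := by
    intro s t t' hs htt'
    rw [bonus, bonus]
    have hspos : (0:ℝ) < (s:ℝ) ^ (1-η) := by
      have : (0:ℝ) < (s:ℝ) := by exact_mod_cast hs
      positivity
    gcongr
  -- splitting identity s = s^η * s^{1-η}
  have hsplit : ∀ s : ℕ, 1 ≤ s → (s:ℝ) = (s:ℝ) ^ η * (s:ℝ) ^ (1-η) := by
    intro s hs
    have hspos : (0:ℝ) < (s:ℝ) := by exact_mod_cast hs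
    rw [← Real.rpow_add hspos]
    norm_num
  -- z for the Ea events
  set za : ℕ → ℝ := fun s => β ^ (1/ξ) * ((m + s : ℕ) : ℝ) ^ (α/ξ) with hza
  have hza1 : ∀ s : ℕ, 1 ≤ za s := by
    intro s
    have h1 : (1:ℝ) ≤ ((m + s : ℕ) : ℝ) := by
      have : 1 ≤ m + s := le_trans hm1 (Nat.le_add_right m s)
      exact_mod_cast this
    have h2 : (1:ℝ) ≤ ((m + s : ℕ) : ℝ) ^ (α/ξ) := Real.one_le_rpow h1 (by positivity)
    calc (1:ℝ) ≤ β ^ (1/ξ) := hb1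
      _ ≤ β ^ (1/ξ) * ((m + s : ℕ) : ℝ) ^ (α/ξ) := le_mul_of_one_le_right (by positivity) h2
  -- the events
  set Eb : ℕ → Set Ω := fun s =>
    {ω | (s : ℝ) * empAvg X i s ω - (s:ℝ) * μ i ≥ (s : ℝ) ^ η * zb s} with hEbdef
  set Ea : ℕ → Set Ω := fun s =>
    {ω | (s : ℝ) * empAvg X istar s ω - (s:ℝ) * μ istar ≤ -((s : ℝ) ^ η * za s)} with hEadef
  -- the inclusion
  have hincl : {ω | ((3 + A n : ℕ) : ℝ) * x ≤ (playCount I i n ω : ℝ)}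
      ⊆ (⋃ s ∈ Finset.Icc (m+1) n, Eb s) ∪ ⋃ s ∈ Finset.Icc 1 n, Ea s := by
    intro ω hω
    simp only [Set.mem_setOf_eq] at hω
    obtain ⟨T, hTdef⟩ : ∃ T, playCount I i n ω = T := ⟨_, rfl⟩
    rw [hTdef] at hω
    have hT2 : u + 2 ≤ (T:ℝ) := by
      have h3 : ((3 + A n : ℕ) : ℝ) * x = ((1 + A n : ℕ) : ℝ) * x + 2 * x := by
        push_cast; ring
      rw [h3] at hω
      nlinarith
    have hmT : m + 2 ≤ T := by
      have h1 : ⌈u + ((2:ℕ):ℝ)⌉₊ = m + 2 := Nat.ceil_add_natCast hu0.le 2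
      have h2 : ⌈u + ((2:ℕ):ℝ)⌉₊ ≤ T := Nat.ceil_le.mpr (by push_cast; linarith)
      omega
    set S : Finset ℕ := (Finset.Icc 1 n).filter (fun l => I l ω = i) with hS
    have hScard : S.card = T := hTdef
    have hSne : S.Nonempty := by
      rw [← Finset.card_pos, hScard]; omega
    set t : ℕ := S.max' hSne with ht
    have htmem : t ∈ S := S.max'_mem hSne
    have htI : I t ω = i := (Finset.mem_filter.mp htmem).2
    have htIcc := Finset.mem_Icc.mp (Finset.mem_filter.mp htmem).1
    have ht1 : 1 ≤ t := htIcc.1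
    have htn : t ≤ n := htIcc.2
    have hTn : T ≤ n := by
      have h1 := Finset.card_filter_le (Finset.Icc 1 n) (fun l => I l ω = i)
      rw [Nat.card_Icc] at h1
      have h2 : S.card ≤ n + 1 - 1 := h1
      omega
    -- play count at t-1
    have hfilter_eq : ((Finset.Icc 1 (t-1)).filter fun l => I l ω = i) = S.erase t := by
      ext l
      simp only [Finset.mem_filter, Finset.mem_erase, Finset.mem_Icc, hS]
      constructor
      · rintro ⟨⟨h1, h2⟩, h3⟩
        have hlt : l < t := by omega
        exact ⟨by omega, ⟨h1, by omega⟩, h3⟩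
      · rintro ⟨hne, ⟨h1, h2⟩, h3⟩
        have hle : l ≤ t := S.le_max' l (by
          simp only [hS, Finset.mem_filter, Finset.mem_Icc]; exact ⟨⟨h1, h2⟩, h3⟩)
        exact ⟨⟨h1, by omega⟩, h3⟩
    have hsc : playCount I i (t-1) ω = T - 1 := by
      rw [playCount, hfilter_eq, Finset.card_erase_of_mem htmem, hScard]
    have hs1 : m + 1 ≤ T - 1 := by omega
    have hsn : T - 1 ≤ n := by omega
    have hs0 : 1 ≤ T - 1 := by omega
    -- the policy inequality
    have hpol := hPolicy t ht1 ω istar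
    rw [htI] at hpol
    obtain ⟨s', hs'def⟩ : ∃ s', playCount I istar (t-1) ω = s' := ⟨_, rfl⟩
    have hidx_i : ucbIdxE X β ξ α η I i (t-1) ω
        = ((ucbIdx X β ξ α η i (T-1) (t-1) ω : ℝ) : EReal) := by
      rw [ucbIdxE, hsc, if_neg (by omega)]
    rw [hidx_i] at hpol
    have hs'1 : 1 ≤ s' := by
      by_contra hcon
      have hs'0 : s' = 0 := by omega
      have htop : ucbIdxE X β ξ α η I istar (t-1) ω = ⊤ := by
        rw [ucbIdxE, hs'def, if_pos hs'0]
      rw [htop] at hpol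
      exact absurd (top_le_iff.mp hpol) (EReal.coe_ne_top _)
    have hidx_star : ucbIdxE X β ξ α η I istar (t-1) ω
        = ((ucbIdx X β ξ α η istar s' (t-1) ω : ℝ) : EReal) := by
      rw [ucbIdxE, hs'def, if_neg (by omega)]
    rw [hidx_star] at hpol
    have hpolR : ucbIdx X β ξ α η istar s' (t-1) ω ≤ ucbIdx X β ξ α η i (T-1) (t-1) ω :=
      EReal.coe_le_coe_iff.mp hpol
    -- (T-1) + s' ≤ t - 1
    have hss' : (T - 1) + s' ≤ t - 1 := by
      have hdisj : Disjoint ((Finset.Icc 1 (t-1)).filter fun l => I l ω = i)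
          ((Finset.Icc 1 (t-1)).filter fun l => I l ω = istar) := by
        rw [Finset.disjoint_left]
        intro l h1 h2
        exact hi ((Finset.mem_filter.mp h1).2.symm.trans (Finset.mem_filter.mp h2).2)
      have hcard := Finset.card_union_of_disjoint hdisj
      have hsub : ((Finset.Icc 1 (t-1)).filter fun l => I l ω = i)
          ∪ ((Finset.Icc 1 (t-1)).filter fun l => I l ω = istar) ⊆ Finset.Icc 1 (t-1) :=
        Finset.union_subset (Finset.filter_subset _ _) (Finset.filter_subset _ _)
      have hle := Finset.card_le_card hsub
      rw [hcard, Nat.card_Icc] at hle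
      have e1 : ((Finset.Icc 1 (t-1)).filter fun l => I l ω = i).card = T - 1 := hsc
      have e2 : ((Finset.Icc 1 (t-1)).filter fun l => I l ω = istar).card = s' := hs'def
      omega
    have hs'n : s' ≤ n := by omega
    by_cases hcase : ω ∈ Ea s'
    · right
      exact Set.mem_biUnion (Finset.mem_Icc.mpr ⟨hs'1, hs'n⟩) hcase
    · left
      -- derive the Eb event
      have hs'pos : (0:ℝ) < (s':ℝ) := by exact_mod_cast hs'1
      simp only [hEadef, Set.mem_setOf_eq, not_le] at hcase
      -- μ* < X̄*_{s'} + bonus(m+s', s')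
      have hstar : μ istar < empAvg X istar s' ω + bonus β ξ α η (m + s') s' := by
        have hmul : (s':ℝ) * bonus β ξ α η (m + s') s' = (s':ℝ) ^ η * za s' := by
          rw [bonus, hza]
          nth_rewrite 1 [hsplit s' hs'1]
          have hsne : ((s':ℝ) ^ (1-η)) ≠ 0 := (Real.rpow_pos_of_pos hs'pos _).ne'
          field_simp
        have hkey : (s':ℝ) * μ istar
            < (s':ℝ) * (empAvg X istar s' ω + bonus β ξ α η (m + s') s') := by
          rw [mul_add, hmul]
          linarith
        exact lt_of_mul_lt_mul_left hkey hs'pos.le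
      -- bonus monotone to time t-1
      have hts' : m + s' ≤ t - 1 := by omega
      have hmono := hBmono s' (m + s') (t-1) hs'1 hts'
      have hstar2 : μ istar < ucbIdx X β ξ α η istar s' (t-1) ω := by
        rw [ucbIdx]; linarith
      have hub : ucbIdx X β ξ α η i (T-1) (t-1) ω ≤ empAvg X i (T-1) ω + Δmin/2 := by
        rw [ucbIdx]
        have := hB (T-1) hs1 (t-1) (by omega)
        linarith
      have hXlb : μ i + Δmin/2 ≤ empAvg X i (T-1) ω := by
        have h1 := hΔmin_le i hi
        linarith
      -- conclude membership in Eb (T-1)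
      refine Set.mem_biUnion (Finset.mem_Icc.mpr ⟨hs1, hsn⟩) ?_
      simp only [hEbdef, Set.mem_setOf_eq, ge_iff_le]
      have hspos : (0:ℝ) < ((T-1:ℕ):ℝ) := by exact_mod_cast hs0
      have hzbeq : ((T-1:ℕ):ℝ) ^ η * zb (T-1) = ((T-1:ℕ):ℝ) * (Δmin/2) := by
        have hzbv : zb (T-1) = ((T-1:ℕ):ℝ) ^ (1-η) * (Δmin/2) := rfl
        rw [hzbv, ← mul_assoc, ← hsplit (T-1) hs0]
      rw [hzbeq]
      have h2 : ((T-1:ℕ):ℝ) * (μ i + Δmin/2) ≤ ((T-1:ℕ):ℝ) * empAvg X i (T-1) ω :=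
        mul_le_mul_of_nonneg_left hXlb hspos.le
      nlinarith
  -- measure bounds for individual events
  have hEbbd : ∀ s ∈ Finset.Icc (m+1) n, P (Eb s) ≤ ENNReal.ofReal ((s:ℝ) ^ (-α)) := by
    intro s hs
    rw [Finset.mem_Icc] at hs
    have hs1 : 1 ≤ s := by omega
    have h1 := (hconc i s hs1 (zb s) (hzb1 s hs.1)).1
    refine le_trans h1 (ENNReal.ofReal_le_ofReal ?_)
    -- β / (zb s)^ξ ≤ s^{-α}
    have hzlb : β ^ (1/ξ) * (n:ℝ) ^ (α/ξ) ≤ zb s := by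
      have h2 := hslb s hs.1
      rw [hzb, ← hb0β]
      nlinarith
    have hzpos : (0:ℝ) < β ^ (1/ξ) * (n:ℝ) ^ (α/ξ) := by positivity
    have h3 : (β ^ (1/ξ) * (n:ℝ) ^ (α/ξ)) ^ ξ ≤ (zb s) ^ ξ :=
      Real.rpow_le_rpow hzpos.le hzlb hξ.le
    have h4 : (β ^ (1/ξ) * (n:ℝ) ^ (α/ξ)) ^ ξ = β * (n:ℝ) ^ α := by
      rw [Real.mul_rpow (by positivity) (by positivity),
        ← Real.rpow_mul hβ0.le, ← Real.rpow_mul (Nat.cast_nonneg n)]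
      rw [one_div_mul_cancel hξ.ne', Real.rpow_one, div_mul_cancel₀ _ hξ.ne']
    have h5 : β / (zb s) ^ ξ ≤ β / (β * (n:ℝ) ^ α) := by
      apply div_le_div_of_nonneg_left hβ0.le (by positivity)
      rw [← h4]; exact h3
    have h6 : β / (β * (n:ℝ) ^ α) = (n:ℝ) ^ (-α) := by
      rw [Real.rpow_neg (Nat.cast_nonneg n)]
      field_simp
    have h7 : (n:ℝ) ^ (-α) ≤ (s:ℝ) ^ (-α) := by
      apply Real.rpow_le_rpow_of_nonpos (by exact_mod_cast hs1) (by exact_mod_cast hs.2)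
      linarith
    linarith
  have hEabd : ∀ s ∈ Finset.Icc 1 n, P (Ea s) ≤ ENNReal.ofReal (((m + s : ℕ):ℝ) ^ (-α)) := by
    intro s hs
    rw [Finset.mem_Icc] at hs
    have h1 := (hconc istar s hs.1 (za s) (hza1 s)).2
    refine le_trans h1 (ENNReal.ofReal_le_ofReal ?_)
    have h4 : (za s) ^ ξ = β * ((m + s : ℕ):ℝ) ^ α := by
      rw [hza]
      rw [Real.mul_rpow (by positivity) (by positivity),
        ← Real.rpow_mul hβ0.le, ← Real.rpow_mul (Nat.cast_nonneg _)]
      rw [one_div_mul_cancel hξ.ne', Real.rpow_one, div_mul_cancel₀ _ hξ.ne']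
    rw [h4]
    rw [Real.rpow_neg (Nat.cast_nonneg _)]
    rw [div_eq_mul_inv, mul_inv, ← mul_assoc, mul_inv_cancel₀ hβ0.ne', one_mul]
  -- put everything together
  have hms : 1 ≤ m := hm1
  calc P {ω | ((3 + A n : ℕ) : ℝ) * x ≤ (playCount I i n ω : ℝ)}
      ≤ P ((⋃ s ∈ Finset.Icc (m+1) n, Eb s) ∪ ⋃ s ∈ Finset.Icc 1 n, Ea s) :=
        measure_mono hincl
    _ ≤ P (⋃ s ∈ Finset.Icc (m+1) n, Eb s) + P (⋃ s ∈ Finset.Icc 1 n, Ea s) :=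
        measure_union_le _ _
    _ ≤ (∑ s ∈ Finset.Icc (m+1) n, P (Eb s)) + ∑ s ∈ Finset.Icc 1 n, P (Ea s) :=
        add_le_add (measure_biUnion_finset_le _ _) (measure_biUnion_finset_le _ _)
    _ ≤ (∑ s ∈ Finset.Icc (m+1) n, ENNReal.ofReal ((s:ℝ) ^ (-α)))
        + ∑ s ∈ Finset.Icc 1 n, ENNReal.ofReal (((m + s : ℕ):ℝ) ^ (-α)) :=
        add_le_add (Finset.sum_le_sum hEbbd) (Finset.sum_le_sum hEabd)
    _ = ENNReal.ofReal (∑ s ∈ Finset.Icc (m+1) n, (s:ℝ) ^ (-α))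
        + ENNReal.ofReal (∑ s ∈ Finset.Icc 1 n, ((m + s : ℕ):ℝ) ^ (-α)) := by
        rw [ENNReal.ofReal_sum_of_nonneg (fun s _ => by positivity),
          ENNReal.ofReal_sum_of_nonneg (fun s _ => by positivity)]
    _ = ENNReal.ofReal ((∑ s ∈ Finset.Icc (m+1) n, (s:ℝ) ^ (-α))
        + ∑ s ∈ Finset.Icc 1 n, ((m + s : ℕ):ℝ) ^ (-α)) := by
        rw [ENNReal.ofReal_add (Finset.sum_nonneg (fun s _ => by positivity))
          (Finset.sum_nonneg (fun s _ => by positivity))]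
    _ ≤ ENNReal.ofReal (2 / (α - 1) * (((1 + A n : ℕ) : ℝ) * x) ^ ((1 : ℝ) - α)) := by
        apply ENNReal.ofReal_le_ofReal
        -- real arithmetic
        have hS1 : ∑ s ∈ Finset.Icc (m+1) n, (s:ℝ) ^ (-α) ≤ (m:ℝ) ^ (1-α) / (α-1) := by
          rw [← Finset.Ico_add_one_right_eq_Icc, Finset.sum_Ico_eq_sum_range]
          calc ∑ j ∈ Finset.range (n + 1 - (m+1)), (((m+1+j : ℕ)):ℝ) ^ (-α)
              = ∑ j ∈ Finset.range (n + 1 - (m+1)), ((m:ℝ) + 1 + j) ^ (-α) := by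
                apply Finset.sum_congr rfl
                intro j _
                congr 1
                push_cast; ring
            _ ≤ (m:ℝ) ^ (1-α) / (α-1) := tail_sum hα1 hms _
        have hS2 : ∑ s ∈ Finset.Icc 1 n, ((m + s : ℕ):ℝ) ^ (-α) ≤ (m:ℝ) ^ (1-α) / (α-1) := by
          rw [← Finset.Ico_add_one_right_eq_Icc, Finset.sum_Ico_eq_sum_range]
          calc ∑ j ∈ Finset.range (n + 1 - 1), (((m + (1 + j) : ℕ)):ℝ) ^ (-α)
              = ∑ j ∈ Finset.range (n + 1 - 1), ((m:ℝ) + 1 + j) ^ (-α) := by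
                apply Finset.sum_congr rfl
                intro j _
                congr 1
                push_cast; ring
            _ ≤ (m:ℝ) ^ (1-α) / (α-1) := tail_sum hα1 hms _
        have hmu : (m:ℝ) ^ (1-α) ≤ u ^ ((1:ℝ)-α) :=
          Real.rpow_le_rpow_of_nonpos hu0 hum (by linarith)
        have hfin : 2 / (α-1) * u ^ ((1:ℝ)-α) = 2 * (u ^ ((1:ℝ)-α) / (α-1)) := by ring
        have h1 : (m:ℝ) ^ (1-α) / (α-1) ≤ u ^ ((1:ℝ)-α) / (α-1) := by gcongr
        rw [← hu]
        linarith
  done
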